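/- In the Weyl algebra ℚ⟨t, x, ∂_t, ∂_x⟩, the element (−x²+x)∂_x² + ((−a−b−1)x + c)∂_x − ab − ∂_t(t−1)∂_x lies in the left ideal generated by (−x²+x)∂_x² + ((−t+1)∂_t + (−a−b−1)x + c − 1)∂_x − ab, (−t+1)x∂_x + (t²−t)∂_t + (−c+2)t + b − 1, and (tx−1)∂_x + at, where a, b, c are central parameters. -/
import Mathlib


/-- The field `ℚ(a,b,c)` of rational functions in the parameters `a`, `b`, `c`. -/
abbrev K15 := FractionRing (MvPolynomial (Fin 3) ℚ)

/-- Defining relations of the Weyl algebra `K15⟨t, x, ∂ₜ, ∂ₓ⟩`: generator `0` is `t`,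
`1` is `x`, `2` is `∂ₜ`, `3` is `∂ₓ`; the relations are `∂ₜ t = t ∂ₜ + 1`,
`∂ₓ x = x ∂ₓ + 1`, and all other pairs of generators commute. -/
inductive W15Rel : FreeAlgebra K15 (Fin 4) → FreeAlgebra K15 (Fin 4) → Prop
  | dt_t : W15Rel (FreeAlgebra.ι K15 2 * FreeAlgebra.ι K15 0)
      (FreeAlgebra.ι K15 0 * FreeAlgebra.ι K15 2 + 1)
  | dx_x : W15Rel (FreeAlgebra.ι K15 3 * FreeAlgebra.ι K15 1)
      (FreeAlgebra.ι K15 1 * FreeAlgebra.ι K15 3 + 1)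
  | comm (i j : Fin 4)
      (h : ¬((i = 2 ∧ j = 0) ∨ (i = 0 ∧ j = 2) ∨ (i = 3 ∧ j = 1) ∨ (i = 1 ∧ j = 3))) :
      W15Rel (FreeAlgebra.ι K15 i * FreeAlgebra.ι K15 j)
        (FreeAlgebra.ι K15 j * FreeAlgebra.ι K15 i)

/-- The Weyl algebra `ℚ(a,b,c)⟨t, x, ∂ₜ, ∂ₓ⟩`. -/
abbrev W15 := RingQuot W15Rel

noncomputable def w15t : W15 := RingQuot.mkAlgHom K15 W15Rel (FreeAlgebra.ι K15 0)
noncomputable def w15x : W15 := RingQuot.mkAlgHom K15 W15Rel (FreeAlgebra.ι K15 1)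
noncomputable def w15dt : W15 := RingQuot.mkAlgHom K15 W15Rel (FreeAlgebra.ι K15 2)
noncomputable def w15dx : W15 := RingQuot.mkAlgHom K15 W15Rel (FreeAlgebra.ι K15 3)

/-- The central parameter `a` in the Weyl algebra. -/
noncomputable def ca : W15 :=
  algebraMap K15 W15 (algebraMap (MvPolynomial (Fin 3) ℚ) K15 (MvPolynomial.X 0))
/-- The central parameter `b`. -/
noncomputable def cb : W15 :=
  algebraMap K15 W15 (algebraMap (MvPolynomial (Fin 3) ℚ) K15 (MvPolynomial.X 1))
/-- The central parameter `c`. -/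
noncomputable def cc : W15 :=
  algebraMap K15 W15 (algebraMap (MvPolynomial (Fin 3) ℚ) K15 (MvPolynomial.X 2))

/-- In the Weyl algebra `ℚ(a,b,c)⟨t, x, ∂ₜ, ∂ₓ⟩`, the element
`(−x²+x)∂ₓ² + ((−a−b−1)x + c)∂ₓ − ab − ∂ₜ(t−1)∂ₓ` lies in the left ideal generated by
`(−x²+x)∂ₓ² + ((−t+1)∂ₜ + (−a−b−1)x + c − 1)∂ₓ − ab`,
`(−t+1)x∂ₓ + (t²−t)∂ₜ + (−c+2)t + b − 1` and `(tx−1)∂ₓ + at`. -/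
lemma key15 {R : Type*} [Ring R] (t x dt dx a b c : R) (h : dt * t = t * dt + 1) :
    (-x ^ 2 + x) * dx ^ 2 + ((-a - b - 1) * x + c) * dx - a * b - dt * (t - 1) * dx
      = 1 * ((-x ^ 2 + x) * dx ^ 2 + ((-t + 1) * dt + (-a - b - 1) * x + c - 1) * dx - a * b)
        + 0 * ((-t + 1) * x * dx + (t ^ 2 - t) * dt + (-c + 2) * t + b - 1)
        + 0 * ((t * x - 1) * dx + a * t) := by
  rw [mul_sub, mul_one, h]
  noncomm_ring

theorem stmt15 :
    ∃ a₁ a₂ a₃ : W15,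
      (-w15x ^ 2 + w15x) * w15dx ^ 2 + ((-ca - cb - 1) * w15x + cc) * w15dx
          - ca * cb - w15dt * (w15t - 1) * w15dx
        = a₁ * ((-w15x ^ 2 + w15x) * w15dx ^ 2
              + ((-w15t + 1) * w15dt + (-ca - cb - 1) * w15x + cc - 1) * w15dx - ca * cb)
          + a₂ * ((-w15t + 1) * w15x * w15dx + (w15t ^ 2 - w15t) * w15dt
              + (-cc + 2) * w15t + cb - 1)
          + a₃ * ((w15t * w15x - 1) * w15dx + ca * w15t) := by
  have h : w15dt * w15t = w15t * w15dt + 1 := by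
    have := RingQuot.mkAlgHom_rel K15 W15Rel.dt_t
    simpa [w15dt, w15t, map_mul, map_add, map_one] using this
  exact ⟨1, 0, 0, key15 w15t w15x w15dt w15dx ca cb cc h⟩
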